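/- Suppose operators D(x), B(x) satisfy D(x₁)B(x₂) = (a(x₁−x₂)/b(x₁−x₂)) B(x₂)D(x₁) − (c(x₁−x₂)/b(x₁−x₂)) B(x₁)D(x₂) and B(x₁)B(x₂) = B(x₂)B(x₁) for all distinct arguments. Then for distinct λ₀, ..., λₙ: D(λ₀)B(λ₁)···B(λₙ) = (∏_{j=1}^n a(λ₀−λⱼ)/b(λ₀−λⱼ)) B(λ₁)···B(λₙ)D(λ₀) − Σ_{i=1}^n (c(λ₀−λᵢ)/b(λ₀−λᵢ)) (∏_{j≠i} a(λᵢ−λⱼ)/b(λᵢ−λⱼ)) B(λ₀)(∏_{j≠i} B(λⱼ)) D(λᵢ). -/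

import Mathlib

open Finset Complex

lemma core_id (γ u w : ℂ) : Complex.sinh (u+γ) * Complex.sinh w + Complex.sinh (γ-w) * Complex.sinh u = Complex.sinh γ * Complex.sinh (u+w) := by
  simp only [Complex.sinh_add, Complex.sinh_sub]
  ring

lemma key_id (γ u w : ℂ) (hu : Complex.sinh u ≠ 0) (hw : Complex.sinh w ≠ 0) (huw : Complex.sinh (u+w) ≠ 0) :
    Complex.sinh (u+γ)/Complex.sinh u * (Complex.sinh γ/Complex.sinh (u+w)) - Complex.sinh γ/Complex.sinh u * (Complex.sinh γ/Complex.sinh w)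
      = Complex.sinh γ/Complex.sinh (u+w) * (Complex.sinh (-w+γ)/Complex.sinh (-w)) := by
  rw [Complex.sinh_neg, show -w+γ = γ-w by ring, div_mul_div_comm, div_mul_div_comm,
    div_mul_div_comm, div_sub_div _ _ (mul_ne_zero hu huw) (mul_ne_zero hu hw),
    div_eq_div_iff (by exact mul_ne_zero (mul_ne_zero hu huw) (mul_ne_zero hu hw))
      (mul_ne_zero huw (neg_ne_zero.2 hw))]
  linear_combination (-(Complex.sinh γ) * Complex.sinh u * Complex.sinh w * Complex.sinh (u+w)) * core_id γ u w

lemma yb_aux {V : Type*} [AddCommGroup V] [Module ℂ V]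
    (γ : ℂ) (D B : ℂ → Module.End ℂ V)
    (hBB : ∀ x₁ x₂, Commute (B x₁) (B x₂))
    (hDB : ∀ x₁ x₂, Complex.sinh (x₁ - x₂) ≠ 0 →
      D x₁ * B x₂
        = (Complex.sinh (x₁ - x₂ + γ) / Complex.sinh (x₁ - x₂)) • (B x₂ * D x₁)
          - (Complex.sinh γ / Complex.sinh (x₁ - x₂)) • (B x₁ * D x₂))
    {ι : Type*} [DecidableEq ι] (l : ι → ℂ) (s : Finset ι) :
    ∀ x₀ : ℂ, (∀ j ∈ s, Complex.sinh (x₀ - l j) ≠ 0) →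
    (∀ i ∈ s, ∀ j ∈ s, i ≠ j → Complex.sinh (l i - l j) ≠ 0) →
    D x₀ * s.noncommProd (fun j => B (l j)) (fun p _ q _ _ => hBB (l p) (l q))
      = (∏ j ∈ s, Complex.sinh (x₀ - l j + γ) / Complex.sinh (x₀ - l j)) •
          (s.noncommProd (fun j => B (l j)) (fun p _ q _ _ => hBB (l p) (l q)) * D x₀)
        - ∑ i ∈ s, ((Complex.sinh γ / Complex.sinh (x₀ - l i))
              * ∏ j ∈ s.erase i,
                  Complex.sinh (l i - l j + γ) / Complex.sinh (l i - l j)) •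
            (B x₀
              * (s.erase i).noncommProd (fun j => B (l j))
                  (fun p _ q _ _ => hBB (l p) (l q))
              * D (l i)) := by
  induction s using Finset.induction_on with
  | empty => intro x₀ _ _; erw [Finset.noncommProd_empty]; simp
  | @insert k t hk ih =>
    intro x₀ hb0 hbij
    have hb0k : Complex.sinh (x₀ - l k) ≠ 0 := hb0 k (mem_insert_self k t)
    have hb0t : ∀ j ∈ t, Complex.sinh (x₀ - l j) ≠ 0 := fun j hj => hb0 j (mem_insert_of_mem hj)
    have hbijt : ∀ i ∈ t, ∀ j ∈ t, i ≠ j → Complex.sinh (l i - l j) ≠ 0 :=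
      fun i hi j hj hij => hbij i (mem_insert_of_mem hi) j (mem_insert_of_mem hj) hij
    have hbk : ∀ j ∈ t, Complex.sinh (l k - l j) ≠ 0 := fun j hj =>
      hbij k (mem_insert_self k t) j (mem_insert_of_mem hj) (fun h => hk (h ▸ hj))
    have ih1 := ih x₀ hb0t hbijt
    have ih2 := ih (l k) hbk hbijt
    erw [Finset.noncommProd_insert_of_notMem _ _ _ _ hk]
    rw [ ← mul_assoc, hDB x₀ (l k) hb0k,
      sub_mul, smul_mul_assoc, smul_mul_assoc, mul_assoc, mul_assoc, ih1, ih2,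
      Finset.sum_insert hk, Finset.prod_insert hk, Finset.erase_insert hk]
    simp only [mul_sub, Finset.mul_sum, smul_sub, Finset.smul_sum, mul_smul_comm, smul_smul, mul_assoc]
    have hswap : ∀ Z : Module.End ℂ V, B (l k) * (B x₀ * Z) = B x₀ * (B (l k) * Z) := fun Z => by
      rw [← mul_assoc, (hBB (l k) x₀).eq, mul_assoc]
    have hS : ∑ x ∈ t,
          (Complex.sinh γ / Complex.sinh (x₀ - l x) *
              ∏ j ∈ (insert k t).erase x, Complex.sinh (l x - l j + γ) / Complex.sinh (l x - l j)) •
            (B x₀ * (((insert k t).erase x).noncommProd (fun j => B (l j))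
                (fun p _ q _ _ => hBB (l p) (l q)) * D (l x)))
        = (∑ x ∈ t,
            (Complex.sinh (x₀ - l k + γ) / Complex.sinh (x₀ - l k) *
              (Complex.sinh γ / Complex.sinh (x₀ - l x) *
                ∏ j ∈ t.erase x, Complex.sinh (l x - l j + γ) / Complex.sinh (l x - l j))) •
            (B (l k) * (B x₀ * ((t.erase x).noncommProd (fun j => B (l j))
                (fun p _ q _ _ => hBB (l p) (l q)) * D (l x)))))
          - ∑ x ∈ t,
            (Complex.sinh γ / Complex.sinh (x₀ - l k) *
              (Complex.sinh γ / Complex.sinh (l k - l x) *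
                ∏ j ∈ t.erase x, Complex.sinh (l x - l j + γ) / Complex.sinh (l x - l j))) •
            (B x₀ * (B (l k) * ((t.erase x).noncommProd (fun j => B (l j))
                (fun p _ q _ _ => hBB (l p) (l q)) * D (l x)))) := by
      rw [← Finset.sum_sub_distrib]
      refine Finset.sum_congr rfl fun i hi => ?_
      have hki : k ≠ i := fun h => hk (h ▸ hi)
      have hkei : k ∉ t.erase i := fun h => hk (Finset.mem_of_mem_erase h)
      have key := key_id γ (x₀ - l k) (l k - l i) hb0k (hbk i hi)
        (by rw [show (x₀ - l k) + (l k - l i) = x₀ - l i by ring]; exact hb0t i hi)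
      rw [show (x₀ - l k) + (l k - l i) = x₀ - l i by ring, neg_sub] at key
      rw [Finset.erase_insert_of_ne hki, Finset.prod_insert hkei]
      erw [Finset.noncommProd_insert_of_notMem _ _ _ _ hkei]
      rw [mul_assoc (B (l k)), hswap,
        ← sub_smul]
      congr 1
      linear_combination (-(∏ j ∈ t.erase i,
        Complex.sinh (l i - l j + γ) / Complex.sinh (l i - l j))) * key
    rw [hS]
    abel


/-- Degree-`(n+1)` Yang–Baxter relation for `D`: if `D(x), B(x)` satisfy the two-point
exchange relations of the Yang–Baxter algebra of the six-vertex model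
(`a(x) = sinh(x+γ)`, `b(x) = sinh x`, `c(x) = sinh γ`), then
`D(λ₀) B(λ₁)⋯B(λₙ) = (∏ⱼ a(λ₀−λⱼ)/b(λ₀−λⱼ)) B(λ₁)⋯B(λₙ) D(λ₀)
  − Σᵢ (c(λ₀−λᵢ)/b(λ₀−λᵢ)) (∏_{j≠i} a(λᵢ−λⱼ)/b(λᵢ−λⱼ)) B(λ₀) (∏_{j≠i} B(λⱼ)) D(λᵢ)`. -/
theorem yang_baxter_higher_degree_D {V : Type*} [AddCommGroup V] [Module ℂ V]
    (γ : ℂ) (D B : ℂ → Module.End ℂ V)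
    (hBB : ∀ x₁ x₂, Commute (B x₁) (B x₂))
    (hDB : ∀ x₁ x₂, Complex.sinh (x₁ - x₂) ≠ 0 →
      D x₁ * B x₂
        = (Complex.sinh (x₁ - x₂ + γ) / Complex.sinh (x₁ - x₂)) • (B x₂ * D x₁)
          - (Complex.sinh γ / Complex.sinh (x₁ - x₂)) • (B x₁ * D x₂))
    (n : ℕ) (x₀ : ℂ) (l : Fin n → ℂ)
    (hb0 : ∀ j, Complex.sinh (x₀ - l j) ≠ 0)
    (hbij : ∀ i j, i ≠ j → Complex.sinh (l i - l j) ≠ 0) :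
    D x₀ * Finset.univ.noncommProd (fun j => B (l j)) (fun p _ q _ _ => hBB (l p) (l q))
      = (∏ j, Complex.sinh (x₀ - l j + γ) / Complex.sinh (x₀ - l j)) •
          (Finset.univ.noncommProd (fun j => B (l j)) (fun p _ q _ _ => hBB (l p) (l q))
            * D x₀)
        - ∑ i, ((Complex.sinh γ / Complex.sinh (x₀ - l i))
              * ∏ j ∈ Finset.univ.erase i,
                  Complex.sinh (l i - l j + γ) / Complex.sinh (l i - l j)) •
            (B x₀
              * (Finset.univ.erase i).noncommProd (fun j => B (l j))
                  (fun p _ q _ _ => hBB (l p) (l q))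
              * D (l i)) := by
  exact yb_aux γ D B hBB hDB l Finset.univ x₀ (fun j _ => hb0 j) (fun i _ j _ h => hbij i j h)
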